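/- Let X ⊂ ℝ^d be a compact convex set with X ⊆ R̄·B_d, let F : X → ℝ be continuously differentiable, M > 0 and δ ∈ (0,1). Define 𝔤(x;M) := M·(x − P_X[x − (1/M)∇F(x)]) and 𝔤_δ(x;M) := M·(x − P_{(1−δ)X}[x − (1/M)∇F(x)]). Then for every x ∈ X: ‖𝔤(x;M)‖² ≤ (5/4)·‖𝔤_δ(x;M)‖² + 5·δ²·M²·R̄². -/

import Mathlib

open MeasureTheory ProbabilityTheory Real Set Filter Pointwise
open scoped Classical ENNReal RealInnerProductSpace

noncomputable section

variable {d : ℕ}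

/-- Euclidean metric projection onto a set: a nearest point of `C`, if one exists. -/
noncomputable def metricProj (C : Set (EuclideanSpace ℝ (Fin d)))
    (x : EuclideanSpace ℝ (Fin d)) : EuclideanSpace ℝ (Fin d) :=
  if h : ∃ y, y ∈ C ∧ ∀ c ∈ C, dist x y ≤ dist x c then h.choose else x

/-- The standard Gaussian measure `N(0, I_d)` on `ℝ^d`. -/
noncomputable def stdGaussian (d : ℕ) : Measure (EuclideanSpace ℝ (Fin d)) :=
  (Measure.pi fun _ : Fin d => gaussianReal 0 1).map
    (MeasurableEquiv.toLp 2 (Fin d → ℝ))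

/-- The uniform distribution on the sphere of radius `√d` in `ℝ^d`,
realized as the pushforward of the standard Gaussian under radial normalization. -/
noncomputable def uniformSphere (d : ℕ) : Measure (EuclideanSpace ℝ (Fin d)) :=
  (stdGaussian d).map (fun z => (Real.sqrt d / ‖z‖) • z)

/-- The set `S(x,r) = {(s - x)/r : s ∈ X}`. -/
def sShift (X : Set (EuclideanSpace ℝ (Fin d))) (x : EuclideanSpace ℝ (Fin d)) (r : ℝ) :
    Set (EuclideanSpace ℝ (Fin d)) :=
  (fun s => r⁻¹ • (s - x)) '' X

/-- The law `Z(x,r)` of the Gaussian perturbation projected onto `S(x,r)`. -/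
noncomputable def zDist (X : Set (EuclideanSpace ℝ (Fin d))) (x : EuclideanSpace ℝ (Fin d))
    (r : ℝ) : Measure (EuclideanSpace ℝ (Fin d)) :=
  (stdGaussian d).map (metricProj (sShift X x r))

/-- `h` is `Λ`-Lipschitz on `X`. -/
def LipOn (h : EuclideanSpace ℝ (Fin d) → ℝ) (Λ : ℝ)
    (X : Set (EuclideanSpace ℝ (Fin d))) : Prop :=
  ∀ x ∈ X, ∀ y ∈ X, |h x - h y| ≤ Λ * ‖x - y‖

/-- `h` is `L`-smooth on `X`: differentiable with `L`-Lipschitz gradient on `X`. -/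
def IsSmoothOn (h : EuclideanSpace ℝ (Fin d) → ℝ) (L : ℝ)
    (X : Set (EuclideanSpace ℝ (Fin d))) : Prop :=
  Differentiable ℝ h ∧ ∀ x ∈ X, ∀ y ∈ X, ‖gradient h x - gradient h y‖ ≤ L * ‖x - y‖

/-- The gradient mapping `𝔤(x; M) = M (x - P_X[x - (1/M) ∇F(x)])`. -/
noncomputable def gradMap (X : Set (EuclideanSpace ℝ (Fin d)))
    (F : EuclideanSpace ℝ (Fin d) → ℝ) (M : ℝ) (x : EuclideanSpace ℝ (Fin d)) :
    EuclideanSpace ℝ (Fin d) :=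
  M • (x - metricProj X (x - (1 / M) • gradient F x))

/-- The 2-ZFGD iterates, given a realization `zbar` of the Gaussian samples. -/
noncomputable def zfgd (X : Set (EuclideanSpace ℝ (Fin d))) (δ η : ℝ) (r : ℕ → ℝ)
    (f φ : EuclideanSpace ℝ (Fin d) → ℝ) (zbar : ℕ → EuclideanSpace ℝ (Fin d))
    (x0 : EuclideanSpace ℝ (Fin d)) : ℕ → EuclideanSpace ℝ (Fin d)
  | 0 => x0
  | k + 1 =>
    let x := zfgd X δ η r f φ zbar x0 k
    let z := metricProj (sShift X x (r k)) (zbar k)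
    metricProj ((1 - δ) • X)
      (x - η • (gradient f x + ((φ (x + r k • z) - φ x) / r k) • z))

/-- The box `Π_β [l β, u β] ⊆ ℝ^d`. -/
def box (l u : Fin d → ℝ) : Set (EuclideanSpace ℝ (Fin d)) :=
  {x | ∀ β, x β ∈ Set.Icc (l β) (u β)}

/-- `h` is `(L 1, …, L d)`-coordinatewise smooth on `X`. -/
def CoordSmoothOn (h : EuclideanSpace ℝ (Fin d) → ℝ) (L : Fin d → ℝ)
    (X : Set (EuclideanSpace ℝ (Fin d))) : Prop :=
  Differentiable ℝ h ∧ ∀ (β : Fin d), ∀ x ∈ X, ∀ t : ℝ,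
    x + t • EuclideanSpace.single β 1 ∈ X →
    |gradient h (x + t • EuclideanSpace.single β 1) β - gradient h x β| ≤ L β * |t|

/-- Joint law of a pair: uniform coordinate on `Fin d` and uniform sign on `{-1, 1}`. -/
noncomputable def unifPair (d : ℕ) : Measure (Fin d × ℝ) :=
  (((d : ℝ≥0∞)⁻¹ • Measure.count : Measure (Fin d))).prod
    (((2 : ℝ≥0∞)⁻¹ • (Measure.dirac (-1) + Measure.dirac 1) : Measure ℝ))

/-- The RZFCD iterates, given realizations `a` of the coordinate draws and `s` of the
sign draws. -/
noncomputable def rzfcd (l u η : Fin d → ℝ) (r : Fin d → ℕ → ℝ)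
    (f φ : EuclideanSpace ℝ (Fin d) → ℝ)
    (a : ℕ → Fin d) (s : ℕ → ℝ) (x0 : EuclideanSpace ℝ (Fin d)) :
    ℕ → EuclideanSpace ℝ (Fin d)
  | 0 => x0
  | k + 1 =>
    let x := rzfcd l u η r f φ a s x0 k
    let β := a k
    let z : ℝ := if u β < x β + r β k then -1 else if x β - r β k < l β then 1 else s k
    let g : ℝ := gradient f x β +
      ((φ (x + (r β k * z) • EuclideanSpace.single β 1) - φ x) / r β k) * z
    WithLp.toLp 2 (Function.update x β (max (l β) (min (u β) (x β - η β * g))))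

lemma metricProj_spec {C : Set (EuclideanSpace ℝ (Fin d))} (hC : IsCompact C)
    (hne : C.Nonempty) (x : EuclideanSpace ℝ (Fin d)) :
    metricProj C x ∈ C ∧ ∀ c ∈ C, dist x (metricProj C x) ≤ dist x c := by
  have hex : ∃ y, y ∈ C ∧ ∀ c ∈ C, dist x y ≤ dist x c := by
    obtain ⟨y, hy, hmin⟩ := hC.exists_isMinOn hne
      ((continuous_const.dist continuous_id).continuousOn)
    exact ⟨y, hy, fun c hc => hmin hc⟩
  rw [metricProj, dif_pos hex]
  exact hex.choose_spec

set_option maxHeartbeats 1000000 in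
lemma metricProj_inner_le {C : Set (EuclideanSpace ℝ (Fin d))} (hC : IsCompact C)
    (hconv : Convex ℝ C) (hne : C.Nonempty) (x : EuclideanSpace ℝ (Fin d))
    {c : EuclideanSpace ℝ (Fin d)} (hc : c ∈ C) :
    ⟪x - metricProj C x, c - metricProj C x⟫ ≤ 0 := by
  obtain ⟨hmem, hmin⟩ := metricProj_spec hC hne x
  haveI : Nonempty C := hne.to_subtype
  have hbdd : BddBelow (Set.range fun w : C => ‖x - (w : EuclideanSpace ℝ (Fin d))‖) := by
    refine ⟨0, ?_⟩
    rintro _ ⟨w, rfl⟩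
    exact norm_nonneg _
  have hinf : ‖x - metricProj C x‖ = ⨅ w : C, ‖x - w‖ := by
    refine le_antisymm (le_ciInf fun w => ?_) (ciInf_le hbdd ⟨_, hmem⟩)
    simpa [dist_eq_norm] using hmin w w.2
  exact (norm_eq_iInf_iff_real_inner_le_zero hconv hmem).1 hinf c hc

lemma metricProj_shrink_dist {C : Set (EuclideanSpace ℝ (Fin d))} (hC : IsCompact C)
    (hconv : Convex ℝ C) (hne : C.Nonempty) {R δ : ℝ}
    (hR : C ⊆ Metric.closedBall 0 R) (hδ0 : 0 < δ) (hδ1 : δ < 1)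
    (y : EuclideanSpace ℝ (Fin d)) :
    ‖metricProj C y - metricProj ((1 - δ) • C) y‖ ≤ δ * R := by
  set p := metricProj C y with hp_def
  set p' := metricProj ((1 - δ) • C) y with hp'_def
  have h1δ : (0 : ℝ) < 1 - δ := by linarith
  have hC' : IsCompact ((1 - δ) • C) := hC.smul _
  have hconv' : Convex ℝ ((1 - δ) • C) := hconv.smul _
  have hne' : ((1 - δ) • C).Nonempty := hne.smul_set
  have hp : p ∈ C := (metricProj_spec hC hne y).1
  obtain ⟨s, hs, hps⟩ : ∃ z, z ∈ C ∧ (1 - δ) • z = p' :=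
    (metricProj_spec hC' hne' y).1
  have hsR : ‖s‖ ≤ R := by simpa using hR hs
  have h1 : ⟪y - p, s - p⟫ ≤ 0 := metricProj_inner_le hC hconv hne y hs
  have h2 : ⟪y - p', (1 - δ) • p - p'⟫ ≤ 0 :=
    metricProj_inner_le hC' hconv' hne' y (smul_mem_smul_set hp)
  have h2b : 0 ≤ ⟪y - p', s - p⟫ := by
    have he : (1 - δ) • p - p' = (1 - δ) • (p - s) := by
      rw [← hps]; module
    rw [he, real_inner_smul_right] at h2
    have h2c : ⟪y - p', p - s⟫ ≤ 0 := by nlinarith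
    have hps' : p - s = -(s - p) := by abel
    rw [hps', inner_neg_right] at h2c
    linarith
  have h3 : ⟪p' - p, s - p⟫ ≤ 0 := by
    have he : p' - p = (y - p) - (y - p') := by abel
    rw [he, inner_sub_left]
    linarith
  have h4 : ‖s - p‖ ^ 2 ≤ δ * ⟪s, s - p⟫ := by
    have he : p' - p = (s - p) - δ • s := by rw [← hps]; module
    rw [he, inner_sub_left, real_inner_self_eq_norm_sq, real_inner_smul_left] at h3
    linarith
  have hkey : ‖p - p'‖ ^ 2 ≤ (δ * R) ^ 2 := by
    have he : p - p' = δ • s - (s - p) := by rw [← hps]; module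
    rw [he, norm_sub_sq_real, norm_smul, real_inner_smul_left]
    have h5 : ‖δ • s‖ = δ * ‖s‖ := by
      rw [norm_smul, Real.norm_of_nonneg hδ0.le]
    have h6 : δ * ‖s‖ ≤ δ * R := by nlinarith
    have h7 : (0 : ℝ) ≤ δ * ‖s‖ := by positivity
    rw [Real.norm_of_nonneg hδ0.le]
    nlinarith [norm_nonneg (s - p)]
  have hδR : (0 : ℝ) ≤ δ * R := by
    have : (0:ℝ) ≤ R := le_trans (norm_nonneg s) hsR
    positivity
  nlinarith [norm_nonneg (p - p')]

/-- Lemma 10 (comparison of the gradient mappings for `X` and the shrunk set `(1-δ)X`). -/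
theorem gradMap_shrink_comparison (d : ℕ) (Rhigh : ℝ)
    (X : Set (EuclideanSpace ℝ (Fin d))) (hXc : IsCompact X) (hXconv : Convex ℝ X)
    (hXu : X ⊆ Metric.closedBall 0 Rhigh)
    (F : EuclideanSpace ℝ (Fin d) → ℝ) (hF : ContDiff ℝ 1 F)
    (M : ℝ) (hM : 0 < M) (δ : ℝ) (hδ0 : 0 < δ) (hδ1 : δ < 1) :
    ∀ x ∈ X,
      ‖gradMap X F M x‖ ^ 2 ≤
        (5 / 4) * ‖gradMap ((1 - δ) • X) F M x‖ ^ 2 + 5 * δ ^ 2 * M ^ 2 * Rhigh ^ 2 := by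
  intro x hx
  have hne : X.Nonempty := ⟨x, hx⟩
  set y := x - (1 / M) • gradient F x with hy_def
  set p := metricProj X y with hp_def
  set p' := metricProj ((1 - δ) • X) y with hp'_def
  have hkey : ‖p - p'‖ ≤ δ * Rhigh :=
    metricProj_shrink_dist hXc hXconv hne hXu hδ0 hδ1 y
  have hdecomp : gradMap X F M x = gradMap ((1 - δ) • X) F M x + M • (p' - p) := by
    simp only [gradMap, ← hy_def, ← hp_def, ← hp'_def]
    module
  have hA : ‖gradMap X F M x‖ ≤ ‖gradMap ((1 - δ) • X) F M x‖ + M * (δ * Rhigh) := by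
    rw [hdecomp]
    refine le_trans (norm_add_le _ _) ?_
    have : ‖M • (p' - p)‖ = M * ‖p' - p‖ := by
      rw [norm_smul, Real.norm_of_nonneg hM.le]
    rw [this, norm_sub_rev (p') p] at *
    have := hkey
    nlinarith
  have hB : (0 : ℝ) ≤ ‖gradMap ((1 - δ) • X) F M x‖ := norm_nonneg _
  have hR : (0 : ℝ) ≤ Rhigh := by
    have := hXu hx
    simp only [Metric.mem_closedBall, dist_zero_right] at this
    exact le_trans (norm_nonneg x) this
  have hc : (0 : ℝ) ≤ M * (δ * Rhigh) := by positivity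
  nlinarith [sq_nonneg (‖gradMap ((1 - δ) • X) F M x‖ - 4 * (M * (δ * Rhigh))),
    norm_nonneg (gradMap X F M x), sq_nonneg (δ * M * Rhigh)]

end
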